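/- Let H be a connected bipartite graph on h ≥ 3 vertices such that ex(n, H) = Ω(n^{1+α}) for some α ∈ (0,1). Then for all n ≥ s ≥ h, there exists an n-vertex graph G that is K_{s,s}-free, contains no induced copy of H, and satisfies e(G) = Ω_h(s^{1−α}·n^{1+α}). -/

import Mathlib

open SimpleGraph

/-- `G` contains no (not necessarily induced) subgraph isomorphic to `K_{s,s}`. -/
def KssFree {V : Type*} (s : ℕ) (G : SimpleGraph V) : Prop :=
  ∀ f : completeBipartiteGraph (Fin s) (Fin s) →g G, ¬ Function.Injective f

attribute [local instance] Classical.propDecidable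

lemma blockdiv {t : ℕ} (ht : 0 < t) (a : ℕ) {x : ℕ} (hx : x < t) : (a * t + x) / t = a := by
  rw [Nat.add_comm, Nat.add_mul_div_right _ _ ht, Nat.div_eq_of_lt hx, Nat.zero_add]

lemma unblock {t a a' x x' : ℕ} (ht : 0 < t) (hx : x < t) (hx' : x' < t)
    (h : a * t + x = a' * t + x') : a = a' ∧ x = x' := by
  have h1 : a = a' := by
    rw [← blockdiv ht a hx, ← blockdiv ht a' hx', h]
  refine ⟨h1, ?_⟩
  rw [h1] at h
  omega

/-- Blow-up of `G₀ : SimpleGraph (Fin m)` into cliques of size `t`, on vertex set `Fin n`. -/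
def blow (m t n : ℕ) (G₀ : SimpleGraph (Fin m)) : SimpleGraph (Fin n) where
  Adj i j := i ≠ j ∧ ∃ (hi : i.1 / t < m) (hj : j.1 / t < m),
      i.1 / t = j.1 / t ∨ G₀.Adj ⟨i.1 / t, hi⟩ ⟨j.1 / t, hj⟩
  symm := by
    constructor
    rintro i j ⟨hne, hi, hj, hor⟩
    exact ⟨hne.symm, hj, hi, by
      rcases hor with h1 | h2
      · exact Or.inl h1.symm
      · exact Or.inr h2.symm⟩
  loopless := by constructor; rintro i ⟨hne, -⟩; exact hne rfl

/-- edge count: `t * t * e(G₀) ≤ e(blow)`. -/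
lemma blow_edges (m t n : ℕ) (G₀ : SimpleGraph (Fin m)) (ht : 0 < t) (hmt : m * t ≤ n) :
    t * t * G₀.edgeFinset.card ≤ (blow m t n G₀).edgeFinset.card := by
  classical
  have key : ∀ (a : Fin m) (x : Fin t), (a.1 * t + x.1) < n := by
    intro a x
    calc a.1 * t + x.1 < a.1 * t + t := by omega
    _ = (a.1 + 1) * t := by ring
    _ ≤ m * t := Nat.mul_le_mul_right t a.2
    _ ≤ n := hmt
  set φ : Fin t × Fin t × G₀.Dart → (blow m t n G₀).Dart := fun p =>
    ⟨(⟨p.2.2.toProd.1.1 * t + p.1.1, key _ _⟩, ⟨p.2.2.toProd.2.1 * t + p.2.1.1, key _ _⟩), by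
      have hadj := p.2.2.adj
      have hne : p.2.2.toProd.1 ≠ p.2.2.toProd.2 := G₀.ne_of_adj hadj
      have d1 : (p.2.2.toProd.1.1 * t + p.1.1) / t = p.2.2.toProd.1.1 := blockdiv ht _ p.1.2
      have d2 : (p.2.2.toProd.2.1 * t + p.2.1.1) / t = p.2.2.toProd.2.1 := blockdiv ht _ p.2.1.2
      refine ⟨?_, ?_, ?_, Or.inr ?_⟩
      · intro hc
        apply hne
        have := congrArg (fun z : Fin n => z.1 / t) hc
        simp only [d1, d2] at this
        exact Fin.ext this
      · rw [d1]; exact p.2.2.toProd.1.2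
      · rw [d2]; exact p.2.2.toProd.2.2
      · have e1 : (⟨(p.2.2.toProd.1.1 * t + p.1.1) / t, by rw [d1]; exact p.2.2.toProd.1.2⟩ : Fin m)
            = p.2.2.toProd.1 := Fin.ext d1
        have e2 : (⟨(p.2.2.toProd.2.1 * t + p.2.1.1) / t, by rw [d2]; exact p.2.2.toProd.2.2⟩ : Fin m)
            = p.2.2.toProd.2 := Fin.ext d2
        convert hadj using 2 <;> exact Fin.ext (by simp [d1, d2])⟩ with hφ
  have hinj : Function.Injective φ := by
    rintro ⟨x, y, d⟩ ⟨x', y', d'⟩ hEq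
    have h1 : d.toProd.1.1 * t + x.1 = d'.toProd.1.1 * t + x'.1 := by
      have := congrArg (fun z : (blow m t n G₀).Dart => z.toProd.1.1) hEq
      simpa [hφ] using this
    have h2 : d.toProd.2.1 * t + y.1 = d'.toProd.2.1 * t + y'.1 := by
      have := congrArg (fun z : (blow m t n G₀).Dart => z.toProd.2.1) hEq
      simpa [hφ] using this
    obtain ⟨ha1, hx1⟩ := unblock ht x.2 x'.2 h1
    obtain ⟨ha2, hy1⟩ := unblock ht y.2 y'.2 h2
    have hd : d = d' := by
      apply SimpleGraph.Dart.ext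
      exact Prod.ext (Fin.ext ha1) (Fin.ext ha2)
    exact Prod.ext (Fin.ext hx1) (Prod.ext (Fin.ext hy1) hd)
  have hcard := Fintype.card_le_of_injective φ hinj
  simp only [Fintype.card_prod, Fintype.card_fin,
    SimpleGraph.dart_card_eq_twice_card_edges] at hcard
  rw [show t * (t * (2 * G₀.edgeFinset.card)) = 2 * (t * t * G₀.edgeFinset.card) by ring] at hcard
  omega

lemma hom_of_parts {h m : ℕ} (hh : 0 < h) (H : SimpleGraph (Fin h)) (hbip : H.Colorable 2)
    (G₀ : SimpleGraph (Fin m)) (SA SB : Finset ℕ) (hdisj : Disjoint SA SB)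
    (hA : SA.card = h) (hB : SB.card = h)
    (cross : ∀ p ∈ SA, ∀ q ∈ SB, ∃ (hp : p < m) (hq : q < m), G₀.Adj ⟨p, hp⟩ ⟨q, hq⟩) :
    ∃ F : H →g G₀, Function.Injective F := by
  obtain ⟨C⟩ := hbip
  set eA : Fin h → ℕ := fun u => ((Finset.equivFinOfCardEq hA).symm u : ℕ) with heA
  set eB : Fin h → ℕ := fun u => ((Finset.equivFinOfCardEq hB).symm u : ℕ) with heB
  have hmemA : ∀ u, eA u ∈ SA := fun u => ((Finset.equivFinOfCardEq hA).symm u).2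
  have hmemB : ∀ u, eB u ∈ SB := fun u => ((Finset.equivFinOfCardEq hB).symm u).2
  have hinjA : Function.Injective eA := fun u v huv => by
    have := Subtype.ext huv
    exact (Finset.equivFinOfCardEq hA).symm.injective this
  have hinjB : Function.Injective eB := fun u v huv => by
    have := Subtype.ext huv
    exact (Finset.equivFinOfCardEq hB).symm.injective this
  set F0 : Fin h → ℕ := fun u => if C u = 0 then eA u else eB u with hF0
  have hu0 : Fin h := ⟨0, hh⟩
  have hltA : ∀ p ∈ SA, p < m := by
    intro p hp
    obtain ⟨h1, h2, -⟩ := cross p hp (eB hu0) (hmemB hu0)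
    exact h1
  have hltB : ∀ q ∈ SB, q < m := by
    intro q hq
    obtain ⟨h1, h2, -⟩ := cross (eA hu0) (hmemA hu0) q hq
    exact h2
  have hFlt : ∀ u, F0 u < m := by
    intro u
    rw [hF0]
    dsimp only
    split
    · exact hltA _ (hmemA u)
    · exact hltB _ (hmemB u)
  set F : Fin h → Fin m := fun u => ⟨F0 u, hFlt u⟩ with hF
  have hcross' : ∀ u v, C u = 0 → C v ≠ 0 → G₀.Adj (F u) (F v) := by
    intro u v hu hv
    obtain ⟨hp, hq, hadj⟩ := cross (eA u) (hmemA u) (eB v) (hmemB v)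
    have e1 : F u = ⟨eA u, hp⟩ := by simp [hF, hF0, hu]
    have e2 : F v = ⟨eB v, hq⟩ := by simp [hF, hF0, hv]
    rw [e1, e2]; exact hadj
  refine ⟨⟨F, ?_⟩, ?_⟩
  · intro u v huv
    have hC := C.valid huv
    by_cases hu : C u = 0
    · have hv : C v ≠ 0 := by rw [hu] at hC; exact fun hc => hC hc.symm
      exact hcross' u v hu hv
    · have hv : C v = 0 := by omega
      exact (hcross' v u hv hu).symm
  · intro u v huv
    have hval : F0 u = F0 v := congrArg Fin.val huv
    by_cases hu : C u = 0 <;> by_cases hv : C v = 0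
    · apply hinjA; simpa [hF0, hu, hv] using hval
    · exfalso
      have h1 : eA u ∈ SA := hmemA u
      have h2 : eB v ∈ SB := hmemB v
      rw [show F0 u = eA u by simp [hF0, hu], show F0 v = eB v by simp [hF0, hv]] at hval
      exact Finset.disjoint_left.mp hdisj h1 (hval ▸ h2)
    · exfalso
      have h1 : eB u ∈ SB := hmemB u
      have h2 : eA v ∈ SA := hmemA v
      rw [show F0 u = eB u by simp [hF0, hu], show F0 v = eA v by simp [hF0, hv]] at hval
      exact Finset.disjoint_left.mp hdisj h2 (hval ▸ h1)
    · apply hinjB; simpa [hF0, hu, hv] using hval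

lemma blow_kssfree {h s t m n : ℕ} (hh : 0 < h) (hs : h ≤ s)
    (H : SimpleGraph (Fin h)) (hbip : H.Colorable 2)
    (G₀ : SimpleGraph (Fin m)) (hfree : ∀ f : H →g G₀, ¬ Function.Injective f)
    (ht : 0 < t) (hcase : t = 1 ∨ 2 * h * t ≤ s) :
    KssFree s (blow m t n G₀) := by
  intro f hinj
  set A : Finset (Fin n) := Finset.univ.image (fun x : Fin s => f (Sum.inl x)) with hA
  set B : Finset (Fin n) := Finset.univ.image (fun x : Fin s => f (Sum.inr x)) with hB
  have hinjl : Function.Injective (fun x : Fin s => f (Sum.inl x)) :=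
    fun a b e => Sum.inl.inj (hinj e)
  have hinjr : Function.Injective (fun x : Fin s => f (Sum.inr x)) :=
    fun a b e => Sum.inr.inj (hinj e)
  have hcardA : A.card = s := by
    rw [hA, Finset.card_image_of_injective _ hinjl, Finset.card_univ, Fintype.card_fin]
  have hcardB : B.card = s := by
    rw [hB, Finset.card_image_of_injective _ hinjr, Finset.card_univ, Fintype.card_fin]
  have hadjAB : ∀ a ∈ A, ∀ b ∈ B, (blow m t n G₀).Adj a b := by
    intro a ha b hb
    rw [hA, Finset.mem_image] at ha
    rw [hB, Finset.mem_image] at hb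
    obtain ⟨x, -, rfl⟩ := ha
    obtain ⟨y, -, rfl⟩ := hb
    exact f.map_rel (by simp)
  have hdisjAB : Disjoint A B := by
    rw [Finset.disjoint_left]
    rintro a ha hb
    rw [hA, Finset.mem_image] at ha
    rw [hB, Finset.mem_image] at hb
    obtain ⟨x, -, hx⟩ := ha
    obtain ⟨y, -, hy⟩ := hb
    have : Sum.inl x = Sum.inr y := hinj (hx.trans hy.symm)
    simp at this
  set bA : Finset ℕ := A.image (fun i : Fin n => i.1 / t) with hbA
  set bB : Finset ℕ := B.image (fun i : Fin n => i.1 / t) with hbB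
  have cross' : ∀ p ∈ bA, ∀ q ∈ bB, p ≠ q →
      ∃ (hp : p < m) (hq : q < m), G₀.Adj ⟨p, hp⟩ ⟨q, hq⟩ := by
    intro p hp q hq hne
    rw [hbA, Finset.mem_image] at hp
    rw [hbB, Finset.mem_image] at hq
    obtain ⟨a, ha, rfl⟩ := hp
    obtain ⟨b, hb, rfl⟩ := hq
    obtain ⟨-, h1, h2, hor⟩ := hadjAB a ha b hb
    exact ⟨h1, h2, hor.resolve_left hne⟩
  -- obtain SA SB
  obtain ⟨SA, SB, hSA, hSB, hSd, hcSA, hcSB⟩ :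
      ∃ SA SB : Finset ℕ, SA ⊆ bA ∧ SB ⊆ bB ∧ Disjoint SA SB ∧ SA.card = h ∧ SB.card = h := by
    rcases hcase with rfl | h2ht
    · -- t = 1 : blobs are just the vertex values
      have hbAval : bA = A.image (fun i : Fin n => i.1) := by
        rw [hbA]; congr 1; funext i; simp
      have hbBval : bB = B.image (fun i : Fin n => i.1) := by
        rw [hbB]; congr 1; funext i; simp
      have hcbA : bA.card = s := by
        rw [hbAval, Finset.card_image_of_injective _ (Fin.val_injective), hcardA]
      have hcbB : bB.card = s := by
        rw [hbBval, Finset.card_image_of_injective _ (Fin.val_injective), hcardB]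
      have hdisjb : Disjoint bA bB := by
        rw [Finset.disjoint_left]
        intro p hp hq
        rw [hbAval, Finset.mem_image] at hp
        rw [hbBval, Finset.mem_image] at hq
        obtain ⟨a, ha, rfl⟩ := hp
        obtain ⟨b, hb, hba⟩ := hq
        have : b = a := Fin.ext hba
        subst this
        exact Finset.disjoint_left.mp hdisjAB ha hb
      obtain ⟨SA, hSA, hcSA⟩ := Finset.exists_subset_card_eq (show h ≤ bA.card by omega)
      obtain ⟨SB, hSB, hcSB⟩ := Finset.exists_subset_card_eq (show h ≤ bB.card by omega)
      exact ⟨SA, SB, hSA, hSB, hdisjb.mono hSA hSB, hcSA, hcSB⟩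
    · -- 2 h t ≤ s
      have hfiber : ∀ (S : Finset (Fin n)), S.card ≤ t * (S.image (fun i : Fin n => i.1 / t)).card := by
        intro S
        apply Finset.card_le_mul_card_image
        intro p hp
        have : (S.filter (fun a : Fin n => a.1 / t = p)).card ≤ (Finset.range t).card := by
          apply Finset.card_le_card_of_injOn (fun a : Fin n => a.1 % t)
          · intro a ha
            simp only [Finset.mem_coe, Finset.mem_range]
            exact Nat.mod_lt _ ht
          · intro a ha b hb hab
            simp only [Finset.coe_filter, Set.mem_setOf_eq] at ha hb
            apply Fin.ext
            have h1 := Nat.div_add_mod a.1 t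
            have h2 := Nat.div_add_mod b.1 t
            rw [ha.2] at h1; rw [hb.2] at h2
            have hab' : a.1 % t = b.1 % t := hab
            omega
        simpa using this
      have hcbA : 2 * h ≤ bA.card := by
        have := hfiber A
        rw [hcardA] at this
        rw [hbA]
        by_contra hc
        push_neg at hc
        have : s ≤ t * (2 * h) := le_trans this (by
          apply Nat.mul_le_mul_left
          omega)
        nlinarith
      have hcbB : 2 * h ≤ bB.card := by
        have := hfiber B
        rw [hcardB] at this
        rw [hbB]
        by_contra hc
        push_neg at hc
        have : s ≤ t * (2 * h) := le_trans this (by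
          apply Nat.mul_le_mul_left
          omega)
        nlinarith
      obtain ⟨SA, hSA, hcSA⟩ := Finset.exists_subset_card_eq (show h ≤ bA.card by omega)
      have hsd : h ≤ (bB \ SA).card := by
        have := Finset.le_card_sdiff SA bB
        omega
      obtain ⟨SB, hSB, hcSB⟩ := Finset.exists_subset_card_eq hsd
      refine ⟨SA, SB, hSA, fun x hx => (Finset.mem_sdiff.mp (hSB hx)).1, ?_, hcSA, hcSB⟩
      rw [Finset.disjoint_right]
      intro x hx
      exact (Finset.mem_sdiff.mp (hSB hx)).2
  obtain ⟨F, hF⟩ := hom_of_parts hh H hbip G₀ SA SB hSd hcSA hcSB (by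
    intro p hp q hq
    exact cross' p (hSA hp) q (hSB hq) (fun hc => Finset.disjoint_left.mp hSd hp (hc ▸ hq)))
  exact hfree F hF

lemma walk_exit {V : Type*} {H : SimpleGraph V} {u v : V} :
    ∀ {x z : V}, H.Walk x z → (x = u ∨ x = v) → z ≠ u → z ≠ v →
      ∃ w, w ≠ u ∧ w ≠ v ∧ (H.Adj u w ∨ H.Adj v w) := by
  intro x z p
  induction p with
  | nil => rintro (rfl | rfl) hzu hzv
           · exact absurd rfl hzu
           · exact absurd rfl hzv
  | cons ha p ih =>
    rename_i a b c
    intro hx hzu hzv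
    by_cases hb : b = u ∨ b = v
    · exact ih hb hzu hzv
    · push_neg at hb
      refine ⟨b, hb.1, hb.2, ?_⟩
      rcases hx with rfl | rfl
      · exact Or.inl ha
      · exact Or.inr ha

lemma blow_no_induced {h t m n : ℕ} (hh : 3 ≤ h)
    (H : SimpleGraph (Fin h)) (hconn : H.Connected) (hbip : H.Colorable 2)
    (G₀ : SimpleGraph (Fin m)) (hfree : ∀ f : H →g G₀, ¬ Function.Injective f) :
    IsEmpty (H ↪g blow m t n G₀) := by
  constructor
  intro e
  have hnontriv : Nontrivial (Fin h) := Fin.nontrivial_iff_two_le.mpr (by omega)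
  -- every vertex has a neighbor
  have hnbr : ∀ u : Fin h, ∃ w, H.Adj u w := by
    intro u
    obtain ⟨z, hz⟩ := exists_ne u
    obtain ⟨p⟩ := hconn.preconnected u z
    cases p with
    | nil => exact absurd rfl hz.symm
    | cons ha _ => exact ⟨_, ha⟩
  set bb : Fin h → ℕ := fun u => (e u).1 / t with hbb
  have hlt : ∀ u : Fin h, bb u < m := by
    intro u
    obtain ⟨w, hw⟩ := hnbr u
    have := (e.map_rel_iff.mpr hw : (blow m t n G₀).Adj (e u) (e w))
    exact this.2.1
  by_cases hbinj : Function.Injective bb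
  · -- all blobs distinct: get a copy of H in G₀
    set F : Fin h → Fin m := fun u => ⟨bb u, hlt u⟩ with hF
    have hFadj : ∀ {u v}, H.Adj u v → G₀.Adj (F u) (F v) := by
      intro u v huv
      obtain ⟨hne, h1, h2, hor⟩ := (e.map_rel_iff.mpr huv : (blow m t n G₀).Adj (e u) (e v))
      rcases hor with heq | hadj
      · exact absurd (hbinj heq) (H.ne_of_adj huv)
      · exact hadj
    have hFinj : Function.Injective F := by
      intro u v huv
      exact hbinj (congrArg Fin.val huv)
    exact hfree ⟨F, hFadj⟩ hFinj
  · -- two vertices in the same blob: triangle in H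
    rw [Function.not_injective_iff] at hbinj
    obtain ⟨u, v, hbuv, huv⟩ := hbinj
    have hbuv' : (e u).1 / t = (e v).1 / t := hbuv
    have hAdjuv : H.Adj u v := by
      apply e.map_rel_iff.mp
      exact ⟨fun hc => huv (e.injective hc), hlt u, hlt v, Or.inl hbuv'⟩
    -- find w ≠ u, v adjacent to u or v
    have hcard : ∃ z : Fin h, z ≠ u ∧ z ≠ v := by
      by_contra hc
      push_neg at hc
      have : Finset.univ ⊆ ({u, v} : Finset (Fin h)) := by
        intro z _
        rcases eq_or_ne z u with rfl | hz
        · simp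
        · simp [hc z hz]
      have hle := Finset.card_le_card this
      simp only [Finset.card_univ, Fintype.card_fin] at hle
      have : ({u, v} : Finset (Fin h)).card ≤ 2 := Finset.card_le_two
      omega
    obtain ⟨z, hzu, hzv⟩ := hcard
    obtain ⟨p⟩ := hconn.preconnected u z
    obtain ⟨w, hwu, hwv, hwadj⟩ := walk_exit p (Or.inl rfl) hzu hzv
    -- in both cases, w is adjacent to both u and v in H
    have hboth : H.Adj u w ∧ H.Adj v w := by
      rcases hwadj with huw | hvw
      · refine ⟨huw, ?_⟩
        obtain ⟨hne, h1, h2, hor⟩ := (e.map_rel_iff.mpr huw : (blow m t n G₀).Adj (e u) (e w))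
        apply e.map_rel_iff.mp
        refine ⟨fun hc => hwv (e.injective hc.symm), hlt v, hlt w, ?_⟩
        rcases hor with heq | hadj
        · exact Or.inl (hbuv' ▸ heq)
        · refine Or.inr ?_
          have : (⟨(e v).1 / t, hlt v⟩ : Fin m) = ⟨(e u).1 / t, hlt u⟩ := Fin.ext hbuv'.symm
          rw [this]
          convert hadj using 2
      · refine ⟨?_, hvw⟩
        obtain ⟨hne, h1, h2, hor⟩ := (e.map_rel_iff.mpr hvw : (blow m t n G₀).Adj (e v) (e w))
        apply e.map_rel_iff.mp
        refine ⟨fun hc => hwu (e.injective hc.symm), hlt u, hlt w, ?_⟩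
        rcases hor with heq | hadj
        · exact Or.inl (hbuv' ▸ heq)
        · refine Or.inr ?_
          have : (⟨(e u).1 / t, hlt u⟩ : Fin m) = ⟨(e v).1 / t, hlt v⟩ := Fin.ext hbuv'
          rw [this]
          convert hadj using 2
    obtain ⟨C⟩ := hbip
    have c1 := C.valid hAdjuv
    have c2 := C.valid hboth.1
    have c3 := C.valid hboth.2
    omega

theorem stmt_5 (h : ℕ) (hh : 3 ≤ h) (H : SimpleGraph (Fin h))
    (hconn : H.Connected) (hbip : H.Colorable 2) (α : ℝ) (hα : α ∈ Set.Ioo (0 : ℝ) 1)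
    (hlow : ∃ c : ℝ, 0 < c ∧ ∃ n₀ : ℕ, ∀ n ≥ n₀, ∃ G : SimpleGraph (Fin n),
      (∀ f : H →g G, ¬ Function.Injective f) ∧ c * (n : ℝ) ^ (1 + α) ≤ G.edgeSet.ncard) :
    ∃ c' : ℝ, 0 < c' ∧ ∃ n₀ : ℕ, ∀ n ≥ n₀, ∀ s : ℕ, h ≤ s → s ≤ n →
      ∃ G : SimpleGraph (Fin n), KssFree s G ∧ IsEmpty (H ↪g G) ∧
        c' * (s : ℝ) ^ (1 - α) * (n : ℝ) ^ (1 + α) ≤ G.edgeSet.ncard := by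
  obtain ⟨hα0, hα1⟩ := hα
  obtain ⟨c, hc, n₀', hlow'⟩ := hlow
  set N : ℕ := max n₀' 2 with hN
  have hN2 : 2 ≤ N := le_max_right _ _
  set K : ℕ := 4 * h + 2 * N with hK
  have hK1 : 1 ≤ K := by omega
  refine ⟨c / (4 * K), by positivity, N, ?_⟩
  intro n hn s hhs hsn
  -- the numeric parameters
  set d1 : ℕ := s / (2 * h) with hd1
  set d2 : ℕ := n / N with hd2
  set t : ℕ := max 1 (min d1 d2) with ht'
  have ht : 0 < t := lt_of_lt_of_le Nat.one_pos (le_max_left _ _)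
  have hd2ge : 1 ≤ d2 := by
    rw [hd2]
    exact Nat.one_le_div_iff (by omega) |>.mpr hn
  have htle : t ≤ d2 := by omega
  set m : ℕ := n / t with hm
  have hmge : N ≤ m := by
    rw [hm]
    rw [Nat.le_div_iff_mul_le ht]
    calc N * t ≤ N * d2 := Nat.mul_le_mul_left N htle
    _ ≤ n := by
      rw [hd2, Nat.mul_comm]
      exact Nat.div_mul_le_self n N
  have hcase : t = 1 ∨ 2 * h * t ≤ s := by
    rcases Nat.eq_zero_or_pos (min d1 d2) with h0 | hpos
    · left; omega
    · right
      have htmin : t = min d1 d2 := by omega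
      have hd1div : 2 * h * d1 ≤ s := by
        rw [hd1, Nat.mul_comm]
        exact Nat.div_mul_le_self s (2 * h)
      calc 2 * h * t ≤ 2 * h * d1 := Nat.mul_le_mul_left _ (by omega)
      _ ≤ s := hd1div
  have hsK : s ≤ K * t := by
    rcases Nat.eq_zero_or_pos (min d1 d2) with h0 | hpos
    · -- t = 1 and (since d2 ≥ 1) d1 = 0, so s < 2h
      have ht1 : t = 1 := by omega
      have hd10 : d1 = 0 := by omega
      have : s < 2 * h := by
        by_contra hc'
        push_neg at hc'
        rw [hd1] at hd10
        have := Nat.one_le_div_iff (by omega) |>.mpr hc'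
        omega
      rw [ht1, Nat.mul_one]
      omega
    · have htmin : t = min d1 d2 := by omega
      rcases Nat.le_total d1 d2 with hle | hle
      · -- t = d1 ≥ 1
        have htd1 : t = d1 := by omega
        have hmod := Nat.div_add_mod s (2 * h)
        have hmodlt : s % (2 * h) < 2 * h := Nat.mod_lt _ (by omega)
        -- s = 2h * d1 + r < 2h(d1+1) ≤ 4h d1 = 4h t ≤ K t
        have h1 : s < 2 * h * (d1 + 1) := by
          rw [← hd1] at hmod
          have hexp : 2 * h * (d1 + 1) = 2 * h * d1 + 2 * h := by ring
          omega
        have h2 : 2 * h * (d1 + 1) ≤ 4 * h * d1 := by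
          have : d1 + 1 ≤ 2 * d1 := by omega
          calc 2 * h * (d1 + 1) ≤ 2 * h * (2 * d1) := Nat.mul_le_mul_left _ this
          _ = 4 * h * d1 := by ring
        have h3 : 4 * h * d1 ≤ K * t := by
          rw [htd1, hK]
          exact Nat.mul_le_mul_right d1 (by omega)
        exact le_of_lt (lt_of_lt_of_le h1 (le_trans h2 h3))
      · -- t = d2 ≥ 1
        have htd2 : t = d2 := by omega
        have hmod := Nat.div_add_mod n N
        have hmodlt : n % N < N := Nat.mod_lt _ (by omega)
        have h1 : n < N * (d2 + 1) := by
          rw [← hd2] at hmod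
          have hexp : N * (d2 + 1) = N * d2 + N := by ring
          omega
        have h2 : N * (d2 + 1) ≤ 2 * N * d2 := by
          have : d2 + 1 ≤ 2 * d2 := by omega
          calc N * (d2 + 1) ≤ N * (2 * d2) := Nat.mul_le_mul_left _ this
          _ = 2 * N * d2 := by ring
        have h3 : 2 * N * d2 ≤ K * t := by
          rw [htd2, hK]
          exact Nat.mul_le_mul_right d2 (by omega)
        exact le_of_lt (lt_of_lt_of_le (lt_of_le_of_lt hsn h1) (le_trans h2 h3))
  have hmt : m * t ≤ n := by rw [hm]; exact Nat.div_mul_le_self n t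
  have hm1 : 1 ≤ m := by omega
  have hn2tm : n ≤ 2 * t * m := by
    have hmod := Nat.div_add_mod n t
    have hmodlt : n % t < t := Nat.mod_lt _ ht
    rw [← hm] at hmod
    have htm : t ≤ t * m := Nat.le_mul_of_pos_right t hm1
    have hexp : 2 * t * m = t * m + t * m := by ring
    omega
  obtain ⟨G₀, hfree₀, hedge₀⟩ := hlow' m (le_trans (le_max_left _ _) hmge)
  refine ⟨blow m t n G₀, ?_, ?_, ?_⟩
  · exact blow_kssfree (by omega) hhs H hbip G₀ hfree₀ ht hcase
  · exact blow_no_induced hh H hconn hbip G₀ hfree₀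
  · have hncard : ∀ (k : ℕ) (G : SimpleGraph (Fin k)), G.edgeSet.ncard = G.edgeFinset.card :=
      fun k G => by rw [← SimpleGraph.coe_edgeFinset, Set.ncard_coe_finset]
    rw [hncard]
    rw [hncard] at hedge₀
    have hE := blow_edges m t n G₀ ht hmt
    set E₀ : ℕ := G₀.edgeFinset.card with hE₀
    set E : ℕ := (blow m t n G₀).edgeFinset.card with hEdef
    have hEr : ((t * t * E₀ : ℕ) : ℝ) ≤ (E : ℝ) := Nat.cast_le.mpr hE
    push_cast at hEr
    have h1t : (1 : ℝ) ≤ t := by exact_mod_cast ht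
    have h0t : (0 : ℝ) < t := by linarith
    have hsKr : (s : ℝ) ≤ (K : ℝ) * t := by exact_mod_cast hsK
    have hnr : (n : ℝ) ≤ 2 * t * m := by exact_mod_cast hn2tm
    have hKr : (1 : ℝ) ≤ (K : ℝ) := by exact_mod_cast hK1
    have h0m : (0 : ℝ) ≤ m := Nat.cast_nonneg m
    have hcK : (0 : ℝ) < c / (4 * K) := by positivity
    calc c / (4 * K) * (s : ℝ) ^ (1 - α) * (n : ℝ) ^ (1 + α)
        ≤ c / (4 * K) * ((K : ℝ) * t) ^ (1 - α) * ((2 : ℝ) * t * m) ^ (1 + α) := by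
          have s1 : (s : ℝ) ^ (1 - α) ≤ ((K : ℝ) * t) ^ (1 - α) :=
            Real.rpow_le_rpow (Nat.cast_nonneg s) hsKr (by linarith)
          have s2 : (n : ℝ) ^ (1 + α) ≤ ((2 : ℝ) * t * m) ^ (1 + α) :=
            Real.rpow_le_rpow (Nat.cast_nonneg n) hnr (by linarith)
          have p1 : (0 : ℝ) ≤ (n : ℝ) ^ (1 + α) := Real.rpow_nonneg (Nat.cast_nonneg n) _
          have p2 : (0 : ℝ) ≤ c / (4 * K) * ((K : ℝ) * t) ^ (1 - α) := by positivity
          exact mul_le_mul (mul_le_mul_of_nonneg_left s1 hcK.le) s2 p1 p2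
      _ = c / (4 * K) * ((K : ℝ) ^ (1 - α) * (2 : ℝ) ^ (1 + α)) *
            ((t : ℝ) ^ (1 - α) * (t : ℝ) ^ (1 + α)) * (m : ℝ) ^ (1 + α) := by
          rw [Real.mul_rpow (by positivity) (by positivity),
            Real.mul_rpow (by positivity) (by positivity),
            Real.mul_rpow (by positivity) (by positivity)]
          ring
      _ = c / (4 * K) * ((K : ℝ) ^ (1 - α) * (2 : ℝ) ^ (1 + α)) *
            ((t : ℝ) * t) * (m : ℝ) ^ (1 + α) := by
          rw [← Real.rpow_add h0t,
            show (1 - α) + (1 + α) = ((2 : ℕ) : ℝ) by push_cast; ring, Real.rpow_natCast]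
          ring
      _ ≤ c / (4 * K) * ((K : ℝ) * 4) * ((t : ℝ) * t) * (m : ℝ) ^ (1 + α) := by
          gcongr c / (4 * K) * ?_ * ((t : ℝ) * t) * (m : ℝ) ^ (1 + α)
          have e1 : (K : ℝ) ^ (1 - α) ≤ (K : ℝ) := by
            calc (K : ℝ) ^ (1 - α) ≤ (K : ℝ) ^ (1 : ℝ) :=
              Real.rpow_le_rpow_of_exponent_le hKr (by linarith)
            _ = K := Real.rpow_one _
          have e2 : (2 : ℝ) ^ (1 + α) ≤ 4 := by
            calc (2 : ℝ) ^ (1 + α) ≤ (2 : ℝ) ^ (2 : ℝ) :=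
              Real.rpow_le_rpow_of_exponent_le (by norm_num) (by linarith)
            _ = 4 := by
              rw [show ((2 : ℝ) : ℝ) = ((2 : ℕ) : ℝ) by norm_num, Real.rpow_natCast]
              norm_num
          have hp1 : (0 : ℝ) ≤ (K : ℝ) ^ (1 - α) := by positivity
          have hp2 : (0 : ℝ) ≤ (2 : ℝ) ^ (1 + α) := by positivity
          nlinarith
      _ = c * ((t : ℝ) * t) * (m : ℝ) ^ (1 + α) := by
          have : (K : ℝ) ≠ 0 := by linarith
          field_simp
      _ = (t : ℝ) * t * (c * (m : ℝ) ^ (1 + α)) := by ring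
      _ ≤ (t : ℝ) * t * E₀ := by
          refine mul_le_mul_of_nonneg_left hedge₀ ?_
          positivity
      _ ≤ E := hEr
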